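/- Let p be a nonzero univariate real polynomial and let d be the number of nonzero coefficients of p. If all exponents in the support of p are congruent modulo 2 (i.e. they are all even or all odd), then the set {|r| : r ∈ ℝ, r ≠ 0, p(r) = 0} of absolute values of the nonzero real roots of p has at most d − 1 elements. -/

import Mathlib

open Polynomial Set

private lemma coeff_X_mul_deriv (p : Polynomial ℝ) (m : ℕ) :
    (Polynomial.X * Polynomial.derivative p).coeff m = m * p.coeff m := by
  cases m with
  | zero => simp
  | succ k =>
      rw [Polynomial.coeff_X_mul, Polynomial.coeff_derivative]
      push_cast
      ring

private lemma posRoots_card : ∀ N : ℕ, ∀ p : Polynomial ℝ, p.support.card = N →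
    (p.roots.toFinset.filter fun x => (0:ℝ) < x).card ≤ N - 1 := by
  intro N
  induction N using Nat.strong_induction_on with
  | _ N ih =>
    intro p hN
    rcases eq_or_ne p 0 with rfl | hp
    · simp
    set n := p.natTrailingDegree with hn
    have hns : n ∈ p.support := Polynomial.natTrailingDegree_mem_support_of_nonzero hp
    set q : Polynomial ℝ := Polynomial.X * Polynomial.derivative p - Polynomial.C (n:ℝ) * p
      with hqdef
    have hqc : ∀ m, q.coeff m = ((m:ℝ) - n) * p.coeff m := by
      intro m
      simp [hqdef, coeff_X_mul_deriv, Polynomial.coeff_C_mul]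
      ring
    have hqs : q.support = p.support.erase n := by
      ext m
      simp only [Polynomial.mem_support_iff, Finset.mem_erase, hqc, mul_ne_zero_iff,
        sub_ne_zero, ne_eq, Nat.cast_inj]
    rcases eq_or_ne q 0 with hq0 | hq0
    · -- p is a monomial: no positive roots
      have hsupp : p.support = {n} := by
        have h1 : p.support.erase n = ∅ := by rw [← hqs, hq0]; simp
        have h2 : p.support ⊆ {n} := by
          intro m hm
          by_contra hmn
          simp only [Finset.mem_singleton] at hmn
          exact absurd (h1 ▸ Finset.mem_erase.2 ⟨hmn, hm⟩) (by simp [h1])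
        exact Finset.Subset.antisymm h2 (Finset.singleton_subset_iff.2 hns)
      have hempty : (p.roots.toFinset.filter fun x => (0:ℝ) < x) = ∅ := by
        rw [Finset.eq_empty_iff_forall_notMem]
        intro x hx
        rw [Finset.mem_filter, Multiset.mem_toFinset, Polynomial.mem_roots hp] at hx
        obtain ⟨hroot, hxpos⟩ := hx
        have hev : p.eval x = p.coeff n * x ^ n := by
          rw [Polynomial.eval_eq_sum, Polynomial.sum_def, hsupp, Finset.sum_singleton]
        have hcn : p.coeff n ≠ 0 := Polynomial.mem_support_iff.1 hns
        have : p.eval x ≠ 0 := by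
          rw [hev]
          exact mul_ne_zero hcn (pow_ne_zero _ (ne_of_gt hxpos))
        exact this hroot
      simp [hempty]
    · -- Rolle step
      have hNpos : 1 ≤ N := by
        rw [← hN]
        exact Finset.card_pos.2 ⟨n, hns⟩
      have hqcard : q.support.card = N - 1 := by
        rw [hqs, Finset.card_erase_of_mem hns, hN]
      have hqcard_lt : q.support.card < N := by omega
      have hqcard_pos : 1 ≤ q.support.card := Finset.card_pos.2 (by
        rw [Finset.nonempty_iff_ne_empty]
        intro h
        exact hq0 (Polynomial.support_eq_empty.1 h))
      set s := p.roots.toFinset.filter fun x => (0:ℝ) < x with hs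
      set t := q.roots.toFinset.filter fun x => (0:ℝ) < x with ht
      have key : s.card ≤ (t \ s).card + 1 := by
        apply Finset.card_le_diff_of_interleaved
        intro x hx y hy hxy _
        rw [hs, Finset.mem_filter, Multiset.mem_toFinset, Polynomial.mem_roots hp] at hx hy
        obtain ⟨hxr, hxpos⟩ := hx
        obtain ⟨hyr, _⟩ := hy
        -- Rolle on f t = p.eval t / t ^ n
        have hcont : ContinuousOn (fun u : ℝ => p.eval u / u ^ n) (Set.Icc x y) := by
          apply ContinuousOn.div (p.continuous_aeval.continuousOn)
            ((continuous_pow n).continuousOn)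
          intro u hu
          exact pow_ne_zero _ (ne_of_gt (lt_of_lt_of_le hxpos hu.1))
        have hderiv : ∀ z ∈ Set.Ioo x y,
            HasDerivAt (fun u : ℝ => p.eval u / u ^ n)
              (q.eval z / z ^ (n + 1)) z := by
          intro z hz
          have hzpos : 0 < z := lt_trans hxpos hz.1
          have h1 : HasDerivAt (fun u : ℝ => p.eval u)
              ((Polynomial.derivative p).eval z) z := p.hasDerivAt z
          have h2 : HasDerivAt (fun u : ℝ => u ^ n)
              ((n : ℝ) * z ^ (n - 1)) z := hasDerivAt_pow n z
          have h3 := h1.div h2 (pow_ne_zero _ (ne_of_gt hzpos))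
          refine h3.congr_deriv ?_
          symm
          have hq_eval : q.eval z = z * (Polynomial.derivative p).eval z - n * p.eval z := by
            simp [hqdef]
          rw [hq_eval]
          rcases Nat.eq_zero_or_pos n with h0 | hpos
          · rw [h0]
            field_simp
            simp
          · obtain ⟨m, hnk⟩ : ∃ m, n = m + 1 := ⟨n - 1, by omega⟩
            rw [hnk]
            have hzm : z ^ m ≠ 0 := pow_ne_zero _ (ne_of_gt hzpos)
            simp only [Nat.add_sub_cancel]
            field_simp
            ring
        obtain ⟨z, hz, hz0⟩ := exists_hasDerivAt_eq_zero hxy hcont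
          (by rw [hxr, hyr]; simp) hderiv
        refine ⟨z, ?_, hz.1, hz.2⟩
        have hzpos : 0 < z := lt_trans hxpos hz.1
        have hqz : q.eval z = 0 := by
          rcases div_eq_zero_iff.1 hz0 with h | h
          · exact h
          · exact absurd h (pow_ne_zero _ (ne_of_gt hzpos))
        rw [ht, Finset.mem_filter, Multiset.mem_toFinset, Polynomial.mem_roots hq0]
        exact ⟨hqz, hzpos⟩
      calc s.card ≤ (t \ s).card + 1 := key
        _ ≤ t.card + 1 := by
            exact add_le_add_left (Finset.card_mono Finset.sdiff_subset) 1
        _ ≤ (q.support.card - 1) + 1 := by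
            exact add_le_add_left (ih q.support.card hqcard_lt q rfl) 1
        _ = q.support.card := by omega
        _ = N - 1 := hqcard

theorem stmt10 (p : Polynomial ℝ) (hp : p ≠ 0) (d : ℕ) (hd : d = p.support.card)
    (hpar : ∀ m ∈ p.support, ∀ k ∈ p.support, m % 2 = k % 2) :
    {s : ℝ | ∃ r : ℝ, r ≠ 0 ∧ p.eval r = 0 ∧ s = |r|}.ncard ≤ d - 1 := by
  set n := p.natTrailingDegree with hn
  have hns : n ∈ p.support := Polynomial.natTrailingDegree_mem_support_of_nonzero hp
  have hev : ∀ x : ℝ, p.eval (-x) = (-1) ^ (n % 2) * p.eval x := by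
    intro x
    rw [Polynomial.eval_eq_sum, Polynomial.eval_eq_sum, Polynomial.sum_def,
      Polynomial.sum_def, Finset.mul_sum]
    apply Finset.sum_congr rfl
    intro m hm
    rw [neg_pow, show ((-1:ℝ)) ^ m = (-1) ^ (n % 2) by
      rw [neg_one_pow_eq_pow_mod_two, hpar m hm n hns]]
    ring
  have hset : {s : ℝ | ∃ r : ℝ, r ≠ 0 ∧ p.eval r = 0 ∧ s = |r|} =
      ↑(p.roots.toFinset.filter fun x => (0:ℝ) < x) := by
    ext u
    simp only [Set.mem_setOf_eq, Finset.coe_filter, Multiset.mem_toFinset,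
      Polynomial.mem_roots hp, Set.mem_setOf_eq]
    constructor
    · rintro ⟨r, hr0, hpr, rfl⟩
      refine ⟨?_, abs_pos.2 hr0⟩
      rcases le_or_gt 0 r with h | h
      · rwa [abs_of_nonneg h]
      · show p.eval |r| = 0
        rw [abs_of_neg h, hev r, hpr, mul_zero]
    · rintro ⟨hpr, hpos⟩
      exact ⟨u, ne_of_gt hpos, hpr, (abs_of_pos hpos).symm⟩
  rw [hset, Set.ncard_coe_finset, hd]
  exact posRoots_card _ p rfl
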